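/- Suppose G₁, v₁ ∼^{L,c,*}_∃ G₂, v₂ for pointed d-featured graphs (G₁, v₁) and (G₂, v₂). Then for every L-layer ACR-GNN N with input dimension d and c-bounded aggregation functions, N(G₁, v₁) = N(G₂, v₂). -/

import Mathlib

/-- A `d`-featured directed graph: finite nonempty vertex set, edge relation,
and a feature map into `{0,1}^d` (represented as `Fin d → Bool`). -/
structure FGraph (d : ℕ) where
  V : Type
  [fintypeV : Fintype V]
  nonemptyV : Nonempty V
  E : V → V → Prop
  f : V → Fin d → Bool

attribute [instance] FGraph.fintypeV

/-- `c`-graded `L`-turn bisimilarity between pointed `d`-featured graphs. -/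
def bisim (d c : ℕ) : (L : ℕ) → (G₁ G₂ : FGraph d) → G₁.V → G₂.V → Prop
  | 0, G₁, G₂, v₁, v₂ => G₁.f v₁ = G₂.f v₂
  | L + 1, G₁, G₂, v₁, v₂ =>
      G₁.f v₁ = G₂.f v₂ ∧
      (∀ k, k ≤ c → ∀ u₁ : Fin k → G₁.V, Function.Injective u₁ →
        (∀ i, G₁.E v₁ (u₁ i)) →
        ∃ u₂ : Fin k → G₂.V, Function.Injective u₂ ∧ (∀ i, G₂.E v₂ (u₂ i)) ∧
          ∀ i, bisim d c L G₁ G₂ (u₁ i) (u₂ i)) ∧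
      (∀ k, k ≤ c → ∀ u₂ : Fin k → G₂.V, Function.Injective u₂ →
        (∀ i, G₂.E v₂ (u₂ i)) →
        ∃ u₁ : Fin k → G₁.V, Function.Injective u₁ ∧ (∀ i, G₁.E v₁ (u₁ i)) ∧
          ∀ i, bisim d c L G₁ G₂ (u₁ i) (u₂ i))

/-- `∼^{L,c,*}_∃` : `c`-graded `L`-turn bisimilarity with (unbounded) global counting. -/
def bisimStar (d c L : ℕ) (G₁ G₂ : FGraph d) (v₁ : G₁.V) (v₂ : G₂.V) : Prop :=
  bisim d c L G₁ G₂ v₁ v₂ ∧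
  (∀ u : G₁.V,
    Set.ncard {u₁ : G₁.V | bisim d c L G₁ G₁ u₁ u} =
      Set.ncard {u₂ : G₂.V | bisim d c L G₂ G₁ u₂ u}) ∧
  (∀ u : G₂.V,
    Set.ncard {u₁ : G₁.V | bisim d c L G₁ G₂ u₁ u} =
      Set.ncard {u₂ : G₂.V | bisim d c L G₂ G₂ u₂ u})

/-- `∼^{L,c,q}_∃` : `c`-graded `L`-turn bisimilarity with global counting bounded by `q`. -/
def bisimQ (d c L q : ℕ) (G₁ G₂ : FGraph d) (v₁ : G₁.V) (v₂ : G₂.V) : Prop :=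
  bisim d c L G₁ G₂ v₁ v₂ ∧
  (∀ u : G₁.V,
    min (Set.ncard {u₁ : G₁.V | bisim d c L G₁ G₁ u₁ u}) q =
      min (Set.ncard {u₂ : G₂.V | bisim d c L G₂ G₁ u₂ u}) q) ∧
  (∀ u : G₂.V,
    min (Set.ncard {u₁ : G₁.V | bisim d c L G₁ G₂ u₁ u}) q =
      min (Set.ncard {u₂ : G₂.V | bisim d c L G₂ G₂ u₂ u}) q)
/-- The `c`-restriction of a multiset: every multiplicity is capped at `c`. -/
noncomputable def mcap {α : Type*} (c : ℕ) (M : Multiset α) : Multiset α :=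
  letI := Classical.decEq α
  M.toFinset.val.bind fun x => Multiset.replicate (min (M.count x) c) x

/-- A function on finite multisets is `c`-bounded if it only depends on the
`c`-restriction of its argument. -/
def CBounded {α β : Type*} (c : ℕ) (F : Multiset α → β) : Prop :=
  ∀ M : Multiset α, F M = F (mcap c M)

/-- An `L`-layer aggregate-combine-readout GNN with input dimension `d`. -/
structure ACRGNN (d L : ℕ) where
  dims : ℕ → ℕ
  dims_zero : dims 0 = d
  agg : (i : ℕ) → Multiset (Fin (dims i) → ℝ) → (Fin (dims i) → ℝ)
  read : (i : ℕ) → Multiset (Fin (dims i) → ℝ) → (Fin (dims i) → ℝ)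
  comb : (i : ℕ) → (Fin (dims i) → ℝ) → (Fin (dims i) → ℝ) → (Fin (dims i) → ℝ) →
    (Fin (dims (i + 1)) → ℝ)
  cls : (Fin (dims L) → ℝ) → Bool

open Classical in
/-- The feature embeddings computed layer by layer by an ACR-GNN on a `d`-featured graph. -/
noncomputable def ACRGNN.emb {d L : ℕ} (N : ACRGNN d L) (G : FGraph d) :
    (i : ℕ) → G.V → (Fin (N.dims i) → ℝ)
  | 0 => fun v j => if G.f v (Fin.cast N.dims_zero j) then 1 else 0
  | i + 1 => fun v =>
      N.comb i (N.emb G i v)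
        (N.agg i ((Finset.univ.filter (fun u => G.E v u)).val.map (N.emb G i)))
        (N.read i (Finset.univ.val.map (N.emb G i)))

/-- Acceptance of a pointed featured graph by an ACR-GNN. -/
noncomputable def ACRGNN.accepts {d L : ℕ} (N : ACRGNN d L) (G : FGraph d) (v : G.V) : Bool :=
  N.cls (N.emb G L v)

/-- Dimension-wise multiset sum. -/
def sumAgg (n : ℕ) : Multiset (Fin n → ℝ) → (Fin n → ℝ) :=
  fun M j => (M.map fun x => x j).sum

/-- A simple ACR-GNN: sum aggregation and readout, combination functions of the form
`ReLU(x₁A + x₂C + x₃R + b)`, and a linear threshold classifier on `ℝ`. -/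
def ACRGNN.IsSimple {d L : ℕ} (N : ACRGNN d L) : Prop :=
  (∀ i, N.agg i = sumAgg (N.dims i)) ∧
  (∀ i, N.read i = sumAgg (N.dims i)) ∧
  (∀ i, ∃ (A C R : Matrix (Fin (N.dims i)) (Fin (N.dims (i + 1))) ℝ)
      (b : Fin (N.dims (i + 1)) → ℝ),
      ∀ x₁ x₂ x₃ j, N.comb i x₁ x₂ x₃ j =
        max 0 (Matrix.vecMul x₁ A j + Matrix.vecMul x₂ C j + Matrix.vecMul x₃ R j + b j)) ∧
  N.dims L = 1 ∧
  ∃ (a : Fin (N.dims L) → ℝ) (t : ℝ), ∀ x, N.cls x = decide (0 ≤ ∑ j, a j * x j + t)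
section Aux

variable {d c : ℕ}

theorem bisim_refl : ∀ (L : ℕ) (G : FGraph d) (v : G.V), bisim d c L G G v v
  | 0, G, v => rfl
  | L + 1, G, v =>
    ⟨rfl,
     fun k _ u₁ hinj hE => ⟨u₁, hinj, hE, fun i => bisim_refl L G (u₁ i)⟩,
     fun k _ u₂ hinj hE => ⟨u₂, hinj, hE, fun i => bisim_refl L G (u₂ i)⟩⟩

theorem bisim_symm : ∀ {L : ℕ} {G₁ G₂ : FGraph d} {v₁ : G₁.V} {v₂ : G₂.V},
    bisim d c L G₁ G₂ v₁ v₂ → bisim d c L G₂ G₁ v₂ v₁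
  | 0, G₁, G₂, v₁, v₂, h => (h : G₁.f v₁ = G₂.f v₂).symm
  | L + 1, G₁, G₂, v₁, v₂, h => by
    obtain ⟨hf, hforth, hback⟩ := h
    exact ⟨hf.symm,
      fun k hk u₂ hinj hE => by
        obtain ⟨u₁, h1, h2, h3⟩ := hback k hk u₂ hinj hE
        exact ⟨u₁, h1, h2, fun i => bisim_symm (h3 i)⟩,
      fun k hk u₁ hinj hE => by
        obtain ⟨u₂, h1, h2, h3⟩ := hforth k hk u₁ hinj hE
        exact ⟨u₂, h1, h2, fun i => bisim_symm (h3 i)⟩⟩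

theorem bisim_trans : ∀ {L : ℕ} {G₁ G₂ G₃ : FGraph d} {v₁ : G₁.V} {v₂ : G₂.V} {v₃ : G₃.V},
    bisim d c L G₁ G₂ v₁ v₂ → bisim d c L G₂ G₃ v₂ v₃ → bisim d c L G₁ G₃ v₁ v₃
  | 0, _, _, _, _, _, _, h12, h23 => h12.trans h23
  | L + 1, G₁, G₂, G₃, v₁, v₂, v₃, h12, h23 => by
    obtain ⟨hf, hforth, hback⟩ := h12
    obtain ⟨hf', hforth', hback'⟩ := h23
    refine ⟨hf.trans hf', ?_, ?_⟩
    · intro k hk u₁ hinj hE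
      obtain ⟨u₂, h1, h2, h3⟩ := hforth k hk u₁ hinj hE
      obtain ⟨u₃, h1', h2', h3'⟩ := hforth' k hk u₂ h1 h2
      exact ⟨u₃, h1', h2', fun i => bisim_trans (h3 i) (h3' i)⟩
    · intro k hk u₃ hinj hE
      obtain ⟨u₂, h1, h2, h3⟩ := hback' k hk u₃ hinj hE
      obtain ⟨u₁, h1', h2', h3'⟩ := hback k hk u₂ h1 h2
      exact ⟨u₁, h1', h2', fun i => bisim_trans (h3' i) (h3 i)⟩

theorem bisim_mono : ∀ {L : ℕ} {G₁ G₂ : FGraph d} {v₁ : G₁.V} {v₂ : G₂.V},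
    bisim d c (L + 1) G₁ G₂ v₁ v₂ → bisim d c L G₁ G₂ v₁ v₂
  | 0, _, _, _, _, h => h.1
  | L + 1, G₁, G₂, v₁, v₂, h => by
    obtain ⟨hf, hforth, hback⟩ := h
    refine ⟨hf, ?_, ?_⟩
    · intro k hk u₁ hinj hE
      obtain ⟨u₂, h1, h2, h3⟩ := hforth k hk u₁ hinj hE
      exact ⟨u₂, h1, h2, fun i => bisim_mono (h3 i)⟩
    · intro k hk u₂ hinj hE
      obtain ⟨u₁, h1, h2, h3⟩ := hback k hk u₂ hinj hE
      exact ⟨u₁, h1, h2, fun i => bisim_mono (h3 i)⟩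

theorem bisim_le {i L : ℕ} (hiL : i ≤ L) {G₁ G₂ : FGraph d} {v₁ : G₁.V} {v₂ : G₂.V}
    (h : bisim d c L G₁ G₂ v₁ v₂) : bisim d c i G₁ G₂ v₁ v₂ := by
  induction L with
  | zero => exact (Nat.le_zero.mp hiL) ▸ h
  | succ L ih =>
    rcases Nat.lt_or_ge i (L + 1) with hlt | hge
    · exact ih (Nat.lt_succ_iff.mp hlt) (bisim_mono h)
    · exact (Nat.le_antisymm hiL hge) ▸ h

end Aux
section Aux2

variable {d c : ℕ}

/-- The bisimilarity relation at level `i` on the disjoint union of vertex sets. -/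
def relAt (d c i : ℕ) (G₁ G₂ : FGraph d) : G₁.V ⊕ G₂.V → G₁.V ⊕ G₂.V → Prop
  | .inl a, .inl a' => bisim d c i G₁ G₁ a a'
  | .inl a, .inr b => bisim d c i G₁ G₂ a b
  | .inr b, .inl a => bisim d c i G₂ G₁ b a
  | .inr b, .inr b' => bisim d c i G₂ G₂ b b'

theorem relAt_refl {i : ℕ} {G₁ G₂ : FGraph d} (x : G₁.V ⊕ G₂.V) : relAt d c i G₁ G₂ x x := by
  cases x <;> exact bisim_refl i _ _

theorem relAt_symm {i : ℕ} {G₁ G₂ : FGraph d} {x y : G₁.V ⊕ G₂.V}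
    (h : relAt d c i G₁ G₂ x y) : relAt d c i G₁ G₂ y x := by
  cases x <;> cases y <;> exact bisim_symm h

theorem relAt_trans {i : ℕ} {G₁ G₂ : FGraph d} {x y z : G₁.V ⊕ G₂.V}
    (h : relAt d c i G₁ G₂ x y) (h' : relAt d c i G₁ G₂ y z) : relAt d c i G₁ G₂ x z := by
  cases x <;> cases y <;> cases z <;> exact bisim_trans h h'

theorem relAt_le {i L : ℕ} (hiL : i ≤ L) {G₁ G₂ : FGraph d} {x y : G₁.V ⊕ G₂.V}
    (h : relAt d c L G₁ G₂ x y) : relAt d c i G₁ G₂ x y := by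
  cases x <;> cases y <;> exact bisim_le hiL h

/-- The setoid at level `L`. -/
def setoidAt (d c L : ℕ) (G₁ G₂ : FGraph d) : Setoid (G₁.V ⊕ G₂.V) :=
  ⟨relAt d c L G₁ G₂, relAt_refl, relAt_symm, relAt_trans⟩

open Classical in
theorem count_mcap {α : Type*} (c : ℕ) (M : Multiset α) (y : α) :
    (mcap c M).count y = min (M.count y) c := by
  classical
  unfold mcap
  rw [Multiset.count_bind]
  by_cases hy : y ∈ M.toFinset
  · rw [show (Multiset.map (fun x => (Multiset.replicate (min (M.count x) c) x).count y)
        M.toFinset.val).sum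
      = ∑ x ∈ M.toFinset, (Multiset.replicate (min (M.count x) c) x).count y from rfl]
    rw [Finset.sum_eq_single y]
    · simp
    · intro b _ hb
      exact Multiset.count_eq_zero.mpr
        (fun hmem => hb (Multiset.eq_of_mem_replicate hmem).symm)
    · intro hy'; exact absurd hy hy'
  · have h0 : y ∉ M := by rwa [Multiset.mem_toFinset] at hy
    rw [Multiset.count_eq_zero.mpr h0]
    simp only [Nat.zero_min]
    rw [Multiset.sum_eq_zero]
    intro n hn
    simp only [Multiset.mem_map] at hn
    obtain ⟨x, hx, rfl⟩ := hn
    rw [Multiset.count_replicate, if_neg]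
    rintro rfl
    exact h0 (Multiset.mem_toFinset.mp hx)

end Aux2
section Aux3

variable {d c : ℕ}

open Classical in
theorem count_le_of_bisim {X : Type*} {Ga Gb : FGraph d} {i : ℕ} {a : Ga.V} {b : Gb.V}
    (hab : bisim d c (i + 1) Ga Gb a b) (fa : Ga.V → X) (fb : Gb.V → X)
    (hemb : ∀ ua ub, bisim d c i Ga Gb ua ub → fa ua = fb ub) (x : X) :
    min (Multiset.count x ((Finset.univ.filter (fun u => Ga.E a u)).val.map fa)) c ≤
      Multiset.count x ((Finset.univ.filter (fun u => Gb.E b u)).val.map fb) := by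
  classical
  set Ta : Finset Ga.V := Finset.univ.filter (fun u => Ga.E a u ∧ x = fa u) with hTa
  set Tb : Finset Gb.V := Finset.univ.filter (fun u => Gb.E b u ∧ x = fb u) with hTb
  have hca : Multiset.count x ((Finset.univ.filter (fun u => Ga.E a u)).val.map fa)
      = Ta.card := by
    rw [Multiset.count_map, hTa]
    rw [show ((Finset.univ.filter (fun u => Ga.E a u)).val.filter (fun u => x = fa u))
        = ((Finset.univ.filter (fun u => Ga.E a u)).filter (fun u => x = fa u)).val from
      (Finset.filter_val _ _).symm]
    rw [Finset.filter_filter]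
    rfl
  have hcb : Multiset.count x ((Finset.univ.filter (fun u => Gb.E b u)).val.map fb)
      = Tb.card := by
    rw [Multiset.count_map, hTb]
    rw [show ((Finset.univ.filter (fun u => Gb.E b u)).val.filter (fun u => x = fb u))
        = ((Finset.univ.filter (fun u => Gb.E b u)).filter (fun u => x = fb u)).val from
      (Finset.filter_val _ _).symm]
    rw [Finset.filter_filter]
    rfl
  rw [hca, hcb]
  set k := min Ta.card c with hk
  obtain ⟨s, hssub, hscard⟩ := Finset.exists_subset_card_eq (s := Ta) (n := k) (min_le_left _ _)
  set e : Fin k → {u // u ∈ s} := fun j => s.equivFin.symm (Fin.cast hscard.symm j) with he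
  have heinj : Function.Injective e := by
    intro j j' hjj
    rw [he] at hjj
    have := s.equivFin.symm.injective hjj
    simpa [Fin.ext_iff] using this
  set u₁ : Fin k → Ga.V := fun j => (e j).val with hu₁
  have hu₁inj : Function.Injective u₁ := fun j j' hjj =>
    heinj (Subtype.ext hjj)
  have hu₁mem : ∀ j, u₁ j ∈ Ta := fun j => hssub (e j).property
  have hu₁E : ∀ j, Ga.E a (u₁ j) := fun j => by
    have := hu₁mem j; rw [hTa, Finset.mem_filter] at this; exact this.2.1
  have hu₁x : ∀ j, x = fa (u₁ j) := fun j => by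
    have := hu₁mem j; rw [hTa, Finset.mem_filter] at this; exact this.2.2
  obtain ⟨u₂, hu₂inj, hu₂E, hbis⟩ := hab.2.1 k (min_le_right _ _) u₁ hu₁inj hu₁E
  have hu₂mem : ∀ j, u₂ j ∈ Tb := fun j => by
    rw [hTb, Finset.mem_filter]
    exact ⟨Finset.mem_univ _, hu₂E j, (hu₁x j).trans (hemb (u₁ j) (u₂ j) (hbis j))⟩
  calc k = (Finset.univ : Finset (Fin k)).card := by simp
    _ ≤ Tb.card := Finset.card_le_card_of_injOn u₂ (fun j _ => hu₂mem j)
        (fun j _ j' _ hjj => hu₂inj hjj)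

open Classical in
theorem mcap_nbr_eq {X : Type*} {Ga Gb : FGraph d} {i : ℕ} {a : Ga.V} {b : Gb.V}
    (hab : bisim d c (i + 1) Ga Gb a b) (fa : Ga.V → X) (fb : Gb.V → X)
    (hemb : ∀ ua ub, bisim d c i Ga Gb ua ub → fa ua = fb ub) :
    mcap c ((Finset.univ.filter (fun u => Ga.E a u)).val.map fa) =
      mcap c ((Finset.univ.filter (fun u => Gb.E b u)).val.map fb) := by
  classical
  apply Multiset.ext.mpr
  intro y
  rw [count_mcap, count_mcap]
  have h1 := count_le_of_bisim hab fa fb hemb y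
  have h2 := count_le_of_bisim (bisim_symm hab) fb fa
    (fun ub ua hba => (hemb ua ub (bisim_symm hba)).symm) y
  exact le_antisymm (le_min h1 (min_le_right _ _)) (le_min h2 (min_le_right _ _))

end Aux3
section Aux4

variable {d c : ℕ}

open Classical in
theorem ncard_setOf {α : Type*} [Fintype α] (P : α → Prop) :
    Set.ncard {x | P x} = (Finset.univ.filter P).card := by
  classical
  rw [Set.ncard_eq_toFinset_card']
  congr 1
  ext x
  simp

open Classical in
theorem global_quot_eq {G₁ G₂ : FGraph d} {L : ℕ}
    (h1 : ∀ u : G₁.V,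
      Set.ncard {u₁ : G₁.V | bisim d c L G₁ G₁ u₁ u} =
        Set.ncard {u₂ : G₂.V | bisim d c L G₂ G₁ u₂ u})
    (h2 : ∀ u : G₂.V,
      Set.ncard {u₁ : G₁.V | bisim d c L G₁ G₂ u₁ u} =
        Set.ncard {u₂ : G₂.V | bisim d c L G₂ G₂ u₂ u}) :
    (Finset.univ.val.map (fun a : G₁.V => Quotient.mk (setoidAt d c L G₁ G₂) (Sum.inl a)))
      = Finset.univ.val.map (fun b : G₂.V => Quotient.mk (setoidAt d c L G₁ G₂) (Sum.inr b)) := by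
  classical
  apply Multiset.ext.mpr
  intro z
  induction z using Quotient.ind with
  | _ w =>
  have hcount : ∀ (α : Type) [Fintype α] (f : α → G₁.V ⊕ G₂.V),
      Multiset.count (Quotient.mk (setoidAt d c L G₁ G₂) w)
        (Finset.univ.val.map (fun a : α => Quotient.mk (setoidAt d c L G₁ G₂) (f a)))
      = (Finset.univ.filter (fun a : α => relAt d c L G₁ G₂ w (f a))).card := by
    intro α _ f
    rw [Multiset.count_map]
    rw [show (Finset.univ.val.filter
          (fun a : α => Quotient.mk (setoidAt d c L G₁ G₂) w
            = Quotient.mk (setoidAt d c L G₁ G₂) (f a)))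
        = (Finset.univ.filter (fun a : α => Quotient.mk (setoidAt d c L G₁ G₂) w
            = Quotient.mk (setoidAt d c L G₁ G₂) (f a))).val from
      (Finset.filter_val _ _).symm]
    rw [show (Finset.univ.filter (fun a : α => Quotient.mk (setoidAt d c L G₁ G₂) w
            = Quotient.mk (setoidAt d c L G₁ G₂) (f a)))
        = (Finset.univ.filter (fun a : α => relAt d c L G₁ G₂ w (f a))) from ?_]
    · rfl
    · apply Finset.filter_congr
      intro a _
      constructor
      · intro hq; exact Quotient.exact hq
      · intro hr; exact Quotient.sound hr
  rw [hcount G₁.V Sum.inl, hcount G₂.V Sum.inr]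
  cases w with
  | inl u =>
    have e1 : (Finset.univ.filter (fun a : G₁.V => relAt d c L G₁ G₂ (Sum.inl u) (Sum.inl a)))
        = (Finset.univ.filter (fun a : G₁.V => bisim d c L G₁ G₁ a u)) := by
      apply Finset.filter_congr; intro a _
      exact ⟨fun h => bisim_symm h, fun h => bisim_symm h⟩
    have e2 : (Finset.univ.filter (fun b : G₂.V => relAt d c L G₁ G₂ (Sum.inl u) (Sum.inr b)))
        = (Finset.univ.filter (fun b : G₂.V => bisim d c L G₂ G₁ b u)) := by
      apply Finset.filter_congr; intro b _
      exact ⟨fun h => bisim_symm h, fun h => bisim_symm h⟩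
    rw [e1, e2, ← ncard_setOf, ← ncard_setOf]
    exact h1 u
  | inr u =>
    have e1 : (Finset.univ.filter (fun a : G₁.V => relAt d c L G₁ G₂ (Sum.inr u) (Sum.inl a)))
        = (Finset.univ.filter (fun a : G₁.V => bisim d c L G₁ G₂ a u)) := by
      apply Finset.filter_congr; intro a _
      exact ⟨fun h => bisim_symm h, fun h => bisim_symm h⟩
    have e2 : (Finset.univ.filter (fun b : G₂.V => relAt d c L G₁ G₂ (Sum.inr u) (Sum.inr b)))
        = (Finset.univ.filter (fun b : G₂.V => bisim d c L G₂ G₂ b u)) := by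
      apply Finset.filter_congr; intro b _
      exact ⟨fun h => bisim_symm h, fun h => bisim_symm h⟩
    rw [e1, e2, ← ncard_setOf, ← ncard_setOf]
    exact h2 u

theorem map_univ_eq_of_lift {α β X : Type*} [Fintype α] [Fintype β] (S : Setoid (α ⊕ β))
    (f : α → X) (g : β → X)
    (hfg : ∀ x y : α ⊕ β, S.r x y → Sum.elim f g x = Sum.elim f g y)
    (hq : (Finset.univ.val.map (fun a : α => Quotient.mk S (Sum.inl a)))
      = Finset.univ.val.map (fun b : β => Quotient.mk S (Sum.inr b))) :
    (Finset.univ.val.map f : Multiset X) = Finset.univ.val.map g := by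
  calc (Finset.univ.val.map f : Multiset X)
      = (Finset.univ.val.map (fun a : α => Quotient.mk S (Sum.inl a))).map
          (Quotient.lift (Sum.elim f g) hfg) := by rw [Multiset.map_map]; rfl
    _ = (Finset.univ.val.map (fun b : β => Quotient.mk S (Sum.inr b))).map
          (Quotient.lift (Sum.elim f g) hfg) := by rw [hq]
    _ = Finset.univ.val.map g := by rw [Multiset.map_map]; rfl

end Aux4
section Aux5

variable {d c : ℕ}

open Classical in
theorem emb_eq_of_relAt {L : ℕ} (G₁ G₂ : FGraph d) (N : ACRGNN d L)
    (hN : ∀ i, CBounded c (N.agg i))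
    (h1 : ∀ u : G₁.V,
      Set.ncard {u₁ : G₁.V | bisim d c L G₁ G₁ u₁ u} =
        Set.ncard {u₂ : G₂.V | bisim d c L G₂ G₁ u₂ u})
    (h2 : ∀ u : G₂.V,
      Set.ncard {u₁ : G₁.V | bisim d c L G₁ G₂ u₁ u} =
        Set.ncard {u₂ : G₂.V | bisim d c L G₂ G₂ u₂ u}) :
    ∀ i, i ≤ L → ∀ x y : G₁.V ⊕ G₂.V, relAt d c i G₁ G₂ x y →
      Sum.elim (N.emb G₁ i) (N.emb G₂ i) x = Sum.elim (N.emb G₁ i) (N.emb G₂ i) y := by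
  intro i
  induction i with
  | zero =>
    intro _ x y hxy
    cases x <;> cases y <;>
    · rename_i a b
      have hf : _ = _ := hxy
      simp only [Sum.elim_inl, Sum.elim_inr, ACRGNN.emb]
      funext j
      rw [show (FGraph.f _ a : Fin d → Bool) = FGraph.f _ b from hf]
  | succ i ih =>
    intro hiL x y hxy
    have hi : i ≤ L := Nat.le_of_succ_le hiL
    have IH := ih hi
    have hread : (Finset.univ.val.map (N.emb G₁ i) : Multiset _)
        = Finset.univ.val.map (N.emb G₂ i) :=
      map_univ_eq_of_lift (setoidAt d c L G₁ G₂) (N.emb G₁ i) (N.emb G₂ i)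
        (fun x y hxy => IH x y (relAt_le hi hxy)) (global_quot_eq h1 h2)
    cases x with
    | inl a =>
      cases y with
      | inl b =>
        have hab : bisim d c (i + 1) G₁ G₁ a b := hxy
        have hA : N.emb G₁ i a = N.emb G₁ i b :=
          IH (Sum.inl a) (Sum.inl b) (bisim_mono hab)
        have hemb : ∀ ua ub, bisim d c i G₁ G₁ ua ub → N.emb G₁ i ua = N.emb G₁ i ub :=
          fun ua ub hb => IH (Sum.inl ua) (Sum.inl ub) hb
        have hB : N.agg i ((Finset.univ.filter (fun u => G₁.E a u)).val.map (N.emb G₁ i))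
            = N.agg i ((Finset.univ.filter (fun u => G₁.E b u)).val.map (N.emb G₁ i)) := by
          rw [hN i, hN i ((Finset.univ.filter (fun u => G₁.E b u)).val.map (N.emb G₁ i)),
            mcap_nbr_eq hab _ _ hemb]
        simp only [Sum.elim_inl, ACRGNN.emb]
        rw [hA, hB]
      | inr b =>
        have hab : bisim d c (i + 1) G₁ G₂ a b := hxy
        have hA : N.emb G₁ i a = N.emb G₂ i b :=
          IH (Sum.inl a) (Sum.inr b) (bisim_mono hab)
        have hemb : ∀ ua ub, bisim d c i G₁ G₂ ua ub → N.emb G₁ i ua = N.emb G₂ i ub :=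
          fun ua ub hb => IH (Sum.inl ua) (Sum.inr ub) hb
        have hB : N.agg i ((Finset.univ.filter (fun u => G₁.E a u)).val.map (N.emb G₁ i))
            = N.agg i ((Finset.univ.filter (fun u => G₂.E b u)).val.map (N.emb G₂ i)) := by
          rw [hN i, hN i ((Finset.univ.filter (fun u => G₂.E b u)).val.map (N.emb G₂ i)),
            mcap_nbr_eq hab _ _ hemb]
        simp only [Sum.elim_inl, Sum.elim_inr, ACRGNN.emb]
        rw [hA, hB, hread]
    | inr a =>
      cases y with
      | inl b =>
        have hab : bisim d c (i + 1) G₂ G₁ a b := hxy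
        have hA : N.emb G₂ i a = N.emb G₁ i b :=
          IH (Sum.inr a) (Sum.inl b) (bisim_mono hab)
        have hemb : ∀ ua ub, bisim d c i G₂ G₁ ua ub → N.emb G₂ i ua = N.emb G₁ i ub :=
          fun ua ub hb => IH (Sum.inr ua) (Sum.inl ub) hb
        have hB : N.agg i ((Finset.univ.filter (fun u => G₂.E a u)).val.map (N.emb G₂ i))
            = N.agg i ((Finset.univ.filter (fun u => G₁.E b u)).val.map (N.emb G₁ i)) := by
          rw [hN i, hN i ((Finset.univ.filter (fun u => G₁.E b u)).val.map (N.emb G₁ i)),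
            mcap_nbr_eq hab _ _ hemb]
        simp only [Sum.elim_inl, Sum.elim_inr, ACRGNN.emb]
        rw [hA, hB, hread]
      | inr b =>
        have hab : bisim d c (i + 1) G₂ G₂ a b := hxy
        have hA : N.emb G₂ i a = N.emb G₂ i b :=
          IH (Sum.inr a) (Sum.inr b) (bisim_mono hab)
        have hemb : ∀ ua ub, bisim d c i G₂ G₂ ua ub → N.emb G₂ i ua = N.emb G₂ i ub :=
          fun ua ub hb => IH (Sum.inr ua) (Sum.inr ub) hb
        have hB : N.agg i ((Finset.univ.filter (fun u => G₂.E a u)).val.map (N.emb G₂ i))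
            = N.agg i ((Finset.univ.filter (fun u => G₂.E b u)).val.map (N.emb G₂ i)) := by
          rw [hN i, hN i ((Finset.univ.filter (fun u => G₂.E b u)).val.map (N.emb G₂ i)),
            mcap_nbr_eq hab _ _ hemb]
        simp only [Sum.elim_inr, ACRGNN.emb]
        rw [hA, hB]

end Aux5
/-- If `G₁, v₁ ∼^{L,c,*}_∃ G₂, v₂`, then every `L`-layer ACR-GNN
with `c`-bounded aggregation functions classifies the two pointed graphs the
same way. -/
theorem stmt7 (d c L : ℕ) (hc : 1 ≤ c)
    (G₁ G₂ : FGraph d) (v₁ : G₁.V) (v₂ : G₂.V)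
    (h : bisimStar d c L G₁ G₂ v₁ v₂)
    (N : ACRGNN d L) (hN : ∀ i, CBounded c (N.agg i)) :
    N.accepts G₁ v₁ = N.accepts G₂ v₂ := by
  obtain ⟨hb, h1, h2⟩ := h
  have key := emb_eq_of_relAt G₁ G₂ N hN h1 h2 L le_rfl (Sum.inl v₁) (Sum.inr v₂) hb
  simp only [Sum.elim_inl, Sum.elim_inr] at key
  unfold ACRGNN.accepts
  rw [key]
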